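/- Let a_n ≥ 0 be a sequence with a_0 = 1, a_n ≤ 1 for all n, and suppose a_n + a_{n+1} ≥ c₁ n^{-γ} for all n ≥ 1, where c₁ > 0 and γ > 0. Define ψ(t) = Σ_{n=0}^∞ (t^n/n!) a_n. Then there exists c' > 0 such that ψ(t) + ψ'(t) ≥ c' e^t t^{-γ} for all sufficiently large t. -/

import Mathlib

/-- If `a_n ∈ [0,1]`, `a_0 = 1`, and `a_n + a_{n+1} ≥ c₁ n^{-γ}` for `n ≥ 1`, then with
`ψ(t) = Σ_n (t^n/n!) a_n` (so `ψ'(t) = Σ_n (t^n/n!) a_{n+1}`), there is `c' > 0` with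
`ψ(t) + ψ'(t) ≥ c' e^t t^{-γ}` for all sufficiently large `t`. -/
theorem stmt16 (γ : ℝ) (hγ : 0 < γ) (c₁ : ℝ) (hc₁ : 0 < c₁)
    (a : ℕ → ℝ) (ha0 : a 0 = 1) (hann : ∀ n, 0 ≤ a n) (ha1 : ∀ n, a n ≤ 1)
    (hlow : ∀ n : ℕ, 1 ≤ n → c₁ * (n : ℝ) ^ (-γ) ≤ a n + a (n + 1)) :
    ∃ c' : ℝ, 0 < c' ∧ ∃ T : ℝ, ∀ t : ℝ, T ≤ t →
      c' * Real.exp t * t ^ (-γ) ≤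
        (∑' n : ℕ, t ^ n / (n.factorial : ℝ) * a n) +
        (∑' n : ℕ, t ^ n / (n.factorial : ℝ) * a (n + 1)) := by
  classical
  refine ⟨c₁ * (2:ℝ) ^ (-γ) / 2, by positivity, 2, fun t ht => ?_⟩
  have ht0 : (0:ℝ) < t := lt_of_lt_of_le two_pos ht
  have hexp : HasSum (fun n : ℕ => t ^ n / (n.factorial : ℝ)) (Real.exp t) := by
    rw [Real.exp_eq_exp_ℝ]
    exact NormedSpace.expSeries_div_hasSum_exp t
  set g : ℕ → ℝ := fun n => t ^ n / (n.factorial : ℝ) with hg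
  have hgpos : ∀ n, 0 ≤ g n := fun n => by
    have h0t : (0:ℝ) ≤ t := ht0.le
    simp only [hg]; positivity
  -- first moment
  have h1 : HasSum (fun n : ℕ => (n : ℝ) * g n) (t * Real.exp t) := by
    have hshift : HasSum (fun n : ℕ => ((n + 1 : ℕ) : ℝ) * g (n + 1)) (t * Real.exp t) := by
      refine (hexp.mul_left t).congr_fun fun n => ?_
      simp only [hg]
      rw [Nat.factorial_succ]
      push_cast
      have h1 : ((n.factorial : ℝ)) ≠ 0 := Nat.cast_ne_zero.mpr n.factorial_ne_zero
      field_simp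
      ring
    have h := (hasSum_nat_add_iff (f := fun n : ℕ => (n : ℝ) * g n) 1).mp hshift
    simpa using h
  -- second factorial moment
  have h2 : HasSum (fun n : ℕ => (n : ℝ) * ((n : ℝ) - 1) * g n) (t ^ 2 * Real.exp t) := by
    have hshift : HasSum (fun n : ℕ => ((n + 2 : ℕ) : ℝ) * (((n + 2 : ℕ) : ℝ) - 1) * g (n + 2))
        (t ^ 2 * Real.exp t) := by
      refine (hexp.mul_left (t ^ 2)).congr_fun fun n => ?_
      simp only [hg]
      rw [show n + 2 = (n + 1) + 1 from rfl, Nat.factorial_succ, Nat.factorial_succ]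
      push_cast
      have h1 : ((n.factorial : ℝ)) ≠ 0 := Nat.cast_ne_zero.mpr n.factorial_ne_zero
      field_simp
      ring
    have h := (hasSum_nat_add_iff (f := fun n : ℕ => (n : ℝ) * ((n : ℝ) - 1) * g n) 2).mp hshift
    simpa [Finset.sum_range_succ] using h
  -- variance-type sum
  have hE : HasSum (fun n : ℕ => ((n : ℝ) - t) ^ 2 * g n) (t * Real.exp t) := by
    have h := h2.add ((h1.mul_left (1 - 2 * t)).add (hexp.mul_left (t ^ 2)))
    have heq : (fun n : ℕ => (n : ℝ) * ((n : ℝ) - 1) * g n +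
        ((1 - 2 * t) * ((n : ℝ) * g n) + t ^ 2 * g n)) =
        fun n : ℕ => ((n : ℝ) - t) ^ 2 * g n := by
      funext n; ring
    have hval : t ^ 2 * Real.exp t + ((1 - 2 * t) * (t * Real.exp t) +
        t ^ 2 * Real.exp t) = t * Real.exp t := by ring
    rw [heq, hval] at h
    exact h
  -- the window
  set P : ℕ → Prop := fun n => 1 ≤ n ∧ (n : ℝ) < 2 * t with hP
  set u : ℕ → ℝ := fun n => if P n then g n else 0 with hu
  set v : ℕ → ℝ := fun n => if P n then 0 else g n with hv
  have huv : ∀ n, u n + v n = g n := fun n => by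
    simp only [hu, hv]; split <;> simp
  have hsu : Summable u := by
    refine Summable.of_nonneg_of_le (fun n => ?_) (fun n => ?_) hexp.summable
    · simp only [hu]; split; exacts [hgpos n, le_rfl]
    · simp only [hu]; split; exacts [le_rfl, hgpos n]
  have hsv : Summable v := by
    refine Summable.of_nonneg_of_le (fun n => ?_) (fun n => ?_) hexp.summable
    · simp only [hv]; split; exacts [le_rfl, hgpos n]
    · simp only [hv]; split; exacts [hgpos n, le_rfl]
  have hvnn : 0 ≤ ∑' n, v n := tsum_nonneg fun n => by
    simp only [hv]; split; exacts [le_rfl, hgpos n]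
  have hsum_uv : (∑' n, u n) + (∑' n, v n) = Real.exp t := by
    rw [← hexp.tsum_eq, ← hsu.tsum_add hsv]
    exact tsum_congr huv
  -- Chebyshev : t * ∑ v ≤ exp t
  have hcheb : t * (∑' n, v n) ≤ Real.exp t := by
    have key : ∀ n, t ^ 2 * v n ≤ ((n : ℝ) - t) ^ 2 * g n := by
      intro n
      simp only [hv]
      split_ifs with h
      · have := hgpos n
        nlinarith [sq_nonneg ((n : ℝ) - t)]
      · have h' : t ^ 2 ≤ ((n : ℝ) - t) ^ 2 := by
          rcases not_and_or.mp h with h0 | h2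
          · have hn0 : n = 0 := by omega
            subst hn0
            simp
          · push_neg at h2
            nlinarith [h2]
        nlinarith [hgpos n, mul_le_mul_of_nonneg_right h' (hgpos n)]
    have hts := Summable.tsum_le_tsum key (hsv.mul_left (t ^ 2)) hE.summable
    rw [tsum_mul_left, hE.tsum_eq] at hts
    nlinarith [hts, ht0, Real.exp_pos t, hvnn]
  -- window mass
  have hwin : Real.exp t / 2 ≤ ∑' n, u n := by
    nlinarith [hsum_uv, hcheb, hvnn, Real.exp_pos t, ht]
  -- target sums
  have hsA : Summable (fun n : ℕ => t ^ n / (n.factorial : ℝ) * a n) := by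
    refine Summable.of_nonneg_of_le (fun n => mul_nonneg (hgpos n) (hann n))
      (fun n => ?_) hexp.summable
    simpa using mul_le_mul_of_nonneg_left (ha1 n) (hgpos n)
  have hsB : Summable (fun n : ℕ => t ^ n / (n.factorial : ℝ) * a (n + 1)) := by
    refine Summable.of_nonneg_of_le (fun n => mul_nonneg (hgpos n) (hann (n + 1)))
      (fun n => ?_) hexp.summable
    simpa using mul_le_mul_of_nonneg_left (ha1 (n + 1)) (hgpos n)
  have hAB : (∑' n : ℕ, t ^ n / (n.factorial : ℝ) * a n) +
      (∑' n : ℕ, t ^ n / (n.factorial : ℝ) * a (n + 1)) =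
      ∑' n : ℕ, g n * (a n + a (n + 1)) := by
    rw [← hsA.tsum_add hsB]
    exact tsum_congr fun n => by simp only [hg]; ring
  have hsAB : Summable (fun n : ℕ => g n * (a n + a (n + 1))) :=
    (hsA.add hsB).congr fun n => by simp only [hg]; ring
  -- pointwise lower bound on the window
  have hc2t : (0:ℝ) < c₁ * (2 * t) ^ (-γ) := by positivity
  have hstep : ∀ n, (c₁ * (2 * t) ^ (-γ)) * u n ≤ g n * (a n + a (n + 1)) := by
    intro n
    simp only [hu]
    split_ifs with h
    · obtain ⟨hn1, hn2⟩ := h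
      have hrp : (2 * t) ^ (-γ) ≤ (n : ℝ) ^ (-γ) := by
        refine Real.rpow_le_rpow_of_nonpos ?_ hn2.le (by linarith)
        exact_mod_cast Nat.lt_of_lt_of_le Nat.zero_lt_one hn1
      have hlb : c₁ * (2 * t) ^ (-γ) ≤ a n + a (n + 1) := by
        calc c₁ * (2 * t) ^ (-γ) ≤ c₁ * (n : ℝ) ^ (-γ) :=
              mul_le_mul_of_nonneg_left hrp hc₁.le
          _ ≤ a n + a (n + 1) := hlow n hn1
      calc (c₁ * (2 * t) ^ (-γ)) * g n = g n * (c₁ * (2 * t) ^ (-γ)) := by ring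
        _ ≤ g n * (a n + a (n + 1)) := mul_le_mul_of_nonneg_left hlb (hgpos n)
    · simpa using mul_nonneg (hgpos n) (by linarith [hann n, hann (n + 1)])
  have hts2 := Summable.tsum_le_tsum hstep (hsu.mul_left _) hsAB
  rw [tsum_mul_left] at hts2
  -- put it together
  have hfin : c₁ * (2:ℝ) ^ (-γ) / 2 * Real.exp t * t ^ (-γ) ≤
      (c₁ * (2 * t) ^ (-γ)) * ∑' n, u n := by
    have h2t : (2 * t : ℝ) ^ (-γ) = (2:ℝ) ^ (-γ) * t ^ (-γ) :=
      Real.mul_rpow (by norm_num) ht0.le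
    calc c₁ * (2:ℝ) ^ (-γ) / 2 * Real.exp t * t ^ (-γ)
        = (c₁ * (2 * t) ^ (-γ)) * (Real.exp t / 2) := by rw [h2t]; ring
      _ ≤ (c₁ * (2 * t) ^ (-γ)) * ∑' n, u n :=
          mul_le_mul_of_nonneg_left hwin hc2t.le
  rw [hAB]
  exact hfin.trans hts2
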